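/- arXiv:2505.06050 — 2 statements merged into one kernel-verified Lean document; each statement's English description precedes it below -/
import Mathlib

section
/- Let p be a probability distribution on a finite set X and r ∈ ℝ. Then sup_{0 ≤ s ≤ 1} inf_{t ∈ Q(X)} [ 2 D(t‖p) + s(H(t) + r) ] = inf_{t ∈ Q(X)} [ 2 D(t‖p) + max{0, H(t) + r} ], i.e. the sup and inf can be exchanged and the inner supremum over s evaluates to the positive-part. -/
/-- `p` is a probability distribution on the finite set `X`. -/
def IsProb {X : Type*} [Fintype X] (p : X → ℝ) : Prop :=
  (∀ x, 0 ≤ p x) ∧ ∑ x, p x = 1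

/-- Base-2 Shannon entropy. -/
noncomputable def shannonEntropy {X : Type*} [Fintype X] (t : X → ℝ) : ℝ :=
  -∑ x, t x * Real.logb 2 (t x)

/-- Base-2 relative entropy (Kullback–Leibler divergence). -/
noncomputable def Dkl {X : Type*} [Fintype X] (t p : X → ℝ) : ℝ :=
  ∑ x, t x * Real.logb 2 (t x / p x)

/-! ### Auxiliary definitions: the tilted (escort) distribution -/

/-- Normalization constant of the tilted distribution. -/
noncomputable def ZZ {X : Type*} [Fintype X] (p : X → ℝ) (s : ℝ) : ℝ :=
  ∑ y, p y ^ (2 / (2 - s))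

/-- The tilted distribution `T_s ∝ p^{2/(2-s)}`. -/
noncomputable def TT {X : Type*} [Fintype X] (p : X → ℝ) (s : ℝ) (x : X) : ℝ :=
  p x ^ (2 / (2 - s)) / ZZ p s

/-- Auxiliary weighted sum. -/
noncomputable def WW {X : Type*} [Fintype X] (p : X → ℝ) (s : ℝ) : ℝ :=
  ∑ x, p x ^ (2 / (2 - s)) * Real.logb 2 (p x)

/-- Gibbs' inequality. -/
lemma gibbs {X : Type*} [Fintype X] (t q : X → ℝ)
    (ht0 : ∀ x, 0 ≤ t x) (ht1 : ∑ x, t x = 1)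
    (hq0 : ∀ x, 0 ≤ q x) (hq1 : ∑ x, q x ≤ 1)
    (hsupp : ∀ x, t x ≠ 0 → 0 < q x) :
    0 ≤ ∑ x, t x * Real.logb 2 (t x / q x) := by
  have key : ∀ x, t x - q x ≤ t x * Real.log (t x / q x) := by
    intro x
    rcases eq_or_lt_of_le (ht0 x) with h | h
    · simp [← h, hq0 x]
    · have hqx : 0 < q x := hsupp x (ne_of_gt h)
      have hlog : Real.log (q x / t x) ≤ q x / t x - 1 :=
        Real.log_le_sub_one_of_pos (by positivity)
      have hrev : Real.log (t x / q x) = - Real.log (q x / t x) := by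
        rw [← Real.log_inv]; congr 1; field_simp
      rw [hrev]
      have := mul_le_mul_of_nonneg_left hlog (le_of_lt h)
      have h2 : t x * (q x / t x - 1) = q x - t x := by field_simp
      nlinarith
  have hsum : (1 : ℝ) - ∑ x, q x ≤ ∑ x, t x * Real.log (t x / q x) := by
    rw [← ht1, ← Finset.sum_sub_distrib]
    exact Finset.sum_le_sum fun x _ => key x
  have hpos : 0 ≤ ∑ x, t x * Real.log (t x / q x) := by linarith
  have : ∑ x, t x * Real.logb 2 (t x / q x)
      = (∑ x, t x * Real.log (t x / q x)) / Real.log 2 := by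
    rw [Finset.sum_div]
    refine Finset.sum_congr rfl fun x _ => ?_
    rw [Real.logb, mul_div_assoc]
  rw [this]
  exact div_nonneg hpos (Real.log_nonneg one_le_two)

section facts
variable {X : Type*} [Fintype X] (p : X → ℝ) {s : ℝ}

lemma beta_bounds (hs : s ∈ Set.Icc (0:ℝ) 1) :
    1 ≤ 2 / (2 - s) ∧ 2 / (2 - s) ≤ 2 ∧ 0 < 2 - s := by
  obtain ⟨h0, h1⟩ := hs
  refine ⟨?_, ?_, by linarith⟩
  · rw [le_div_iff₀ (by linarith)]; linarith
  · rw [div_le_iff₀ (by linarith)]; linarith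

lemma ZZ_pos (hp : IsProb p) : 0 < ZZ p s := by
  obtain ⟨x, hx⟩ : ∃ x, 0 < p x := by
    by_contra hc
    push_neg at hc
    have : ∑ x, p x = 0 := Finset.sum_eq_zero fun x _ => le_antisymm (hc x) (hp.1 x)
    rw [hp.2] at this; norm_num at this
  refine Finset.sum_pos' (fun y _ => Real.rpow_nonneg (hp.1 y) _) ⟨x, Finset.mem_univ x, ?_⟩
  exact Real.rpow_pos_of_pos hx _

lemma TT_zero (hs : s ∈ Set.Icc (0:ℝ) 1) (x : X) (hx : p x = 0) : TT p s x = 0 := by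
  have hb := (beta_bounds hs).1
  rw [TT, hx, Real.zero_rpow (by linarith), zero_div]

lemma TT_prob (hp : IsProb p) : IsProb (TT p s) := by
  have hZ := ZZ_pos p hp (s := s)
  constructor
  · intro x; exact div_nonneg (Real.rpow_nonneg (hp.1 x) _) hZ.le
  · simp only [TT]
    rw [← Finset.sum_div, ← ZZ, div_self hZ.ne']

lemma TT_pos (hp : IsProb p) (x : X) (hx : 0 < p x) : 0 < TT p s x :=
  div_pos (Real.rpow_pos_of_pos hx _) (ZZ_pos p hp)

lemma key_identity (hp : IsProb p) (hs : s ∈ Set.Icc (0:ℝ) 1) (r : ℝ) (t : X → ℝ)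
    (ht : IsProb t) (hsupp : ∀ x, p x = 0 → t x = 0) :
    2 * Dkl t p + s * (shannonEntropy t + r)
      = (2 - s) * (∑ x, t x * Real.logb 2 (t x / TT p s x))
        - (2 - s) * Real.logb 2 (ZZ p s) + s * r := by
  have hZ : 0 < ZZ p s := ZZ_pos p hp
  have hpt : ∀ x, t x ≠ 0 → 0 < p x := fun x hx =>
    (hp.1 x).lt_of_ne fun h => hx (hsupp x h.symm)
  have point : ∀ x, 2 * (t x * Real.logb 2 (t x / p x)) - s * (t x * Real.logb 2 (t x))
      = (2 - s) * (t x * Real.logb 2 (t x / TT p s x))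
        - (2 - s) * (t x * Real.logb 2 (ZZ p s)) := by
    intro x
    by_cases hx : t x = 0
    · simp [hx]
    · have hpx : 0 < p x := hpt x hx
      have hT : 0 < TT p s x := TT_pos p hp x hpx
      have hβ : (2:ℝ) - s ≠ 0 := (beta_bounds hs).2.2.ne'
      have e1 : Real.logb 2 (t x / p x) = Real.logb 2 (t x) - Real.logb 2 (p x) :=
        Real.logb_div hx hpx.ne'
      have e2 : Real.logb 2 (t x / TT p s x) = Real.logb 2 (t x) - Real.logb 2 (TT p s x) :=
        Real.logb_div hx hT.ne'
      have e3 : Real.logb 2 (TT p s x)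
          = (2 / (2 - s)) * Real.logb 2 (p x) - Real.logb 2 (ZZ p s) := by
        rw [TT, Real.logb_div (Real.rpow_pos_of_pos hpx _).ne' hZ.ne']
        congr 1
        rw [Real.logb, Real.logb, Real.log_rpow hpx]; ring
      rw [e1, e2, e3]
      field_simp
      ring
  have sumeq : ∑ x, (2 * (t x * Real.logb 2 (t x / p x)) - s * (t x * Real.logb 2 (t x)))
      = ∑ x, ((2 - s) * (t x * Real.logb 2 (t x / TT p s x))
        - (2 - s) * (t x * Real.logb 2 (ZZ p s))) :=
    Finset.sum_congr rfl fun x _ => point x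
  simp only [Finset.sum_sub_distrib, ← Finset.mul_sum] at sumeq
  have hz : ∑ x, t x * Real.logb 2 (ZZ p s) = Real.logb 2 (ZZ p s) := by
    rw [← Finset.sum_mul, ht.2, one_mul]
  rw [hz] at sumeq
  rw [Dkl, shannonEntropy]
  linarith [sumeq]

lemma TT_value (hp : IsProb p) (hs : s ∈ Set.Icc (0:ℝ) 1) (r : ℝ) :
    2 * Dkl (TT p s) p + s * (shannonEntropy (TT p s) + r)
      = s * r - (2 - s) * Real.logb 2 (ZZ p s) := by
  rw [key_identity p hp hs r (TT p s) (TT_prob p hp) (fun x hx => TT_zero p hs x hx)]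
  have h0 : ∑ x, TT p s x * Real.logb 2 (TT p s x / TT p s x) = 0 :=
    Finset.sum_eq_zero fun x _ => by
      by_cases hx : TT p s x = 0
      · simp [hx]
      · rw [div_self hx, Real.logb_one, mul_zero]
  rw [h0]; ring

lemma lower_bound (hp : IsProb p) (hs : s ∈ Set.Icc (0:ℝ) 1) (r : ℝ) (t : X → ℝ)
    (ht : IsProb t) (hsupp : ∀ x, p x = 0 → t x = 0) :
    s * r - (2 - s) * Real.logb 2 (ZZ p s) ≤ 2 * Dkl t p + s * (shannonEntropy t + r) := by
  rw [key_identity p hp hs r t ht hsupp]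
  have hpt : ∀ x, t x ≠ 0 → 0 < p x := fun x hx =>
    (hp.1 x).lt_of_ne fun h => hx (hsupp x h.symm)
  have hg : 0 ≤ ∑ x, t x * Real.logb 2 (t x / TT p s x) :=
    gibbs t (TT p s) ht.1 ht.2 (TT_prob p hp).1 (le_of_eq (TT_prob p hp).2)
      (fun x hx => TT_pos p hp x (hpt x hx))
  nlinarith [(beta_bounds hs).2.2]

lemma entropy_formula (hp : IsProb p) (hs : s ∈ Set.Icc (0:ℝ) 1) :
    shannonEntropy (TT p s)
      = Real.logb 2 (ZZ p s) - 2 / (2 - s) / ZZ p s * WW p s := by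
  have hZ : 0 < ZZ p s := ZZ_pos p hp
  have hβ1 : 1 ≤ 2 / (2 - s) := (beta_bounds hs).1
  have point : ∀ x : X, TT p s x * Real.logb 2 (TT p s x)
      = 2 / (2 - s) / ZZ p s * (p x ^ (2 / (2 - s)) * Real.logb 2 (p x))
        - Real.logb 2 (ZZ p s) / ZZ p s * p x ^ (2 / (2 - s)) := by
    intro x
    rcases (hp.1 x).eq_or_lt with h0 | hpx
    · rw [TT, ← h0, Real.zero_rpow (by linarith)]
      simp
    · have hr : (0:ℝ) < p x ^ (2 / (2 - s)) := Real.rpow_pos_of_pos hpx _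
      rw [TT, Real.logb_div hr.ne' hZ.ne']
      have hrp : Real.logb 2 (p x ^ (2 / (2 - s))) = 2 / (2 - s) * Real.logb 2 (p x) := by
        rw [Real.logb, Real.logb, Real.log_rpow hpx]; ring
      rw [hrp]
      have gen : ∀ a b c Z β : ℝ, Z ≠ 0 →
          a / Z * (β * b - c) = β / Z * (a * b) - c / Z * a := by
        intros a b c Z β hZne; field_simp
      exact gen _ _ _ _ _ hZ.ne'
  rw [shannonEntropy, Finset.sum_congr rfl fun x _ => point x,
    Finset.sum_sub_distrib, ← Finset.mul_sum, ← Finset.mul_sum]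
  have hW : ∑ x, p x ^ (2 / (2 - s)) * Real.logb 2 (p x) = WW p s := rfl
  have hZ' : ∑ x, p x ^ (2 / (2 - s)) = ZZ p s := rfl
  rw [hW, hZ']
  field_simp
  ring

lemma h_cont (hp : IsProb p) (r : ℝ) :
    ContinuousOn (fun u => shannonEntropy (TT p u) + r) (Set.Icc (0:ℝ) 1) := by
  have hne : ∀ u ∈ Set.Icc (0:ℝ) 1, (2:ℝ) - u ≠ 0 := fun u hu =>
    (by linarith [hu.2] : (0:ℝ) < 2 - u).ne'
  have cβ : ContinuousOn (fun u : ℝ => 2 / (2 - u)) (Set.Icc (0:ℝ) 1) :=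
    ContinuousOn.div continuousOn_const (by fun_prop) hne
  have cP : ∀ x : X, ContinuousOn (fun u : ℝ => p x ^ (2 / (2 - u))) (Set.Icc (0:ℝ) 1) := by
    intro x
    rcases (hp.1 x).eq_or_lt with h0 | hpx
    · refine (continuousOn_const (c := (0:ℝ))).congr fun u hu => ?_
      rw [← h0, Real.zero_rpow (by linarith [(beta_bounds hu).1])]
    · refine (Real.continuous_exp.comp_continuousOn
        ((continuousOn_const (c := Real.log (p x))).mul cβ)).congr fun u hu => ?_
      rw [Real.rpow_def_of_pos hpx]; rfl
  have cZ : ContinuousOn (fun u => ZZ p u) (Set.Icc (0:ℝ) 1) := by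
    simp only [ZZ]; exact continuousOn_finset_sum _ fun x _ => cP x
  have cW : ContinuousOn (fun u => WW p u) (Set.Icc (0:ℝ) 1) := by
    simp only [WW]; exact continuousOn_finset_sum _ fun x _ => (cP x).mul continuousOn_const
  have hZne : ∀ u ∈ Set.Icc (0:ℝ) 1, ZZ p u ≠ 0 := fun u _ => (ZZ_pos p hp).ne'
  have main : ContinuousOn
      (fun u => (Real.log (ZZ p u) / Real.log 2 - 2 / (2 - u) / ZZ p u * WW p u) + r)
      (Set.Icc (0:ℝ) 1) :=
    (((cZ.log hZne).div_const _).sub ((cβ.div cZ hZne).mul cW)).add continuousOn_const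
  refine main.congr fun u hu => ?_
  rw [entropy_formula p hp hu, Real.logb]

lemma selection (hp : IsProb p) (r : ℝ) :
    ∃ u ∈ Set.Icc (0:ℝ) 1,
      max 0 (shannonEntropy (TT p u) + r) = u * (shannonEntropy (TT p u) + r) := by
  set h : ℝ → ℝ := fun u => shannonEntropy (TT p u) + r with hh
  by_cases h0 : h 0 ≤ 0
  · exact ⟨0, ⟨le_refl _, zero_le_one⟩, by rw [max_eq_left h0, zero_mul]⟩
  by_cases h1 : 0 ≤ h 1
  · exact ⟨1, ⟨zero_le_one, le_refl _⟩, by rw [max_eq_right h1, one_mul]⟩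
  push_neg at h0 h1
  have ivt := intermediate_value_Icc' (zero_le_one) (h_cont p hp r)
  have hmem : (0:ℝ) ∈ Set.Icc (h 1) (h 0) := ⟨h1.le, h0.le⟩
  obtain ⟨u, hu, hu0⟩ := ivt hmem
  have hu0' : shannonEntropy (TT p u) + r = 0 := hu0
  exact ⟨u, hu, by rw [hu0']; simp⟩

end facts

/-- Minimax exchange (an instance of Sion's theorem):
`sup_{0≤s≤1} inf_t [2D(t‖p) + s(H(t)+r)] = inf_t [2D(t‖p) + max{0, H(t)+r}]`. -/
theorem minimax_positive_part {X : Type*} [Fintype X] (p : X → ℝ) (hp : IsProb p) (r : ℝ) :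
    sSup {v | ∃ s ∈ Set.Icc (0:ℝ) 1,
        v = sInf {w | ∃ t : X → ℝ, IsProb t ∧ (∀ x, p x = 0 → t x = 0) ∧
          w = 2 * Dkl t p + s * (shannonEntropy t + r)}} =
      sInf {w | ∃ t : X → ℝ, IsProb t ∧ (∀ x, p x = 0 → t x = 0) ∧
        w = 2 * Dkl t p + max 0 (shannonEntropy t + r)} := by
  let S : ℝ → Set ℝ := fun s =>
    {w | ∃ t : X → ℝ, IsProb t ∧ (∀ x, p x = 0 → t x = 0) ∧
      w = 2 * Dkl t p + s * (shannonEntropy t + r)}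
  let R : Set ℝ :=
    {w | ∃ t : X → ℝ, IsProb t ∧ (∀ x, p x = 0 → t x = 0) ∧
      w = 2 * Dkl t p + max 0 (shannonEntropy t + r)}
  let L : Set ℝ := {v | ∃ s ∈ Set.Icc (0:ℝ) 1, v = sInf (S s)}
  show sSup L = sInf R
  let c : ℝ → ℝ := fun s => s * r - (2 - s) * Real.logb 2 (ZZ p s)
  -- D(p‖p) = 0
  have hDklpp : Dkl p p = 0 := Finset.sum_eq_zero fun x _ => by
    by_cases hx : p x = 0
    · simp [hx]
    · rw [div_self hx, Real.logb_one, mul_zero]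
  have hSlb : ∀ s ∈ Set.Icc (0:ℝ) 1, ∀ w ∈ S s, c s ≤ w := by
    rintro s hs w ⟨t, ht, hts, rfl⟩
    exact lower_bound p hp hs r t ht hts
  have hSmem : ∀ s ∈ Set.Icc (0:ℝ) 1, c s ∈ S s := fun s hs =>
    ⟨TT p s, TT_prob p hp, fun x hx => TT_zero p hs x hx, (TT_value p hp hs r).symm⟩
  have hSinf : ∀ s ∈ Set.Icc (0:ℝ) 1, sInf (S s) = c s := fun s hs =>
    le_antisymm (csInf_le ⟨c s, hSlb s hs⟩ (hSmem s hs))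
      (le_csInf ⟨c s, hSmem s hs⟩ (hSlb s hs))
  have Rne : R.Nonempty :=
    ⟨2 * Dkl p p + max 0 (shannonEntropy p + r), p, hp, fun x h => h, rfl⟩
  have Rlb : ∀ w ∈ R, (0:ℝ) ≤ w := by
    rintro w ⟨t, ht, hts, rfl⟩
    have hD : 0 ≤ Dkl t p :=
      gibbs t p ht.1 ht.2 hp.1 hp.2.le
        (fun x hx => (hp.1 x).lt_of_ne fun h => hx (hts x h.symm))
    have hm := le_max_left (0:ℝ) (shannonEntropy t + r)
    linarith
  have Rbdd : BddBelow R := ⟨0, Rlb⟩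
  have smax : ∀ s ∈ Set.Icc (0:ℝ) 1, ∀ a : ℝ, s * a ≤ max 0 a := by
    intro s hs a
    rcases le_or_gt 0 a with ha | ha
    · calc s * a ≤ 1 * a := mul_le_mul_of_nonneg_right hs.2 ha
        _ = a := one_mul a
        _ ≤ max 0 a := le_max_right 0 a
    · exact (mul_nonpos_of_nonneg_of_nonpos hs.1 ha.le).trans (le_max_left 0 a)
  have Lne : L.Nonempty := ⟨sInf (S 0), 0, ⟨le_refl _, zero_le_one⟩, rfl⟩
  have Lub : ∀ v ∈ L, v ≤ max 0 (shannonEntropy p + r) := by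
    rintro v ⟨s, hs, rfl⟩
    rw [hSinf s hs]
    have h1 : c s ≤ 2 * Dkl p p + s * (shannonEntropy p + r) :=
      lower_bound p hp hs r p hp (fun x h => h)
    rw [hDklpp] at h1
    have h2 := smax s hs (shannonEntropy p + r)
    linarith
  have Lbdd : BddAbove L := ⟨_, Lub⟩
  apply le_antisymm
  · refine csSup_le Lne ?_
    rintro v ⟨s, hs, rfl⟩
    rw [hSinf s hs]
    refine le_csInf Rne ?_
    rintro w ⟨t, ht, hts, rfl⟩
    have h1 : c s ≤ 2 * Dkl t p + s * (shannonEntropy t + r) :=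
      lower_bound p hp hs r t ht hts
    have h2 := smax s hs (shannonEntropy t + r)
    linarith
  · obtain ⟨u, hu, hkey⟩ := selection p hp r
    have hmem : (2 * Dkl (TT p u) p + max 0 (shannonEntropy (TT p u) + r)) ∈ R :=
      ⟨TT p u, TT_prob p hp, fun x hx => TT_zero p hu x hx, rfl⟩
    have h1 : sInf R ≤ 2 * Dkl (TT p u) p + max 0 (shannonEntropy (TT p u) + r) :=
      csInf_le Rbdd hmem
    have h2 : 2 * Dkl (TT p u) p + max 0 (shannonEntropy (TT p u) + r) = c u := by
      rw [hkey]
      exact TT_value p hp hu r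
    have h3 : c u ≤ sSup L :=
      le_csSup Lbdd ⟨u, hu, (hSinf u hu).symm⟩
    linarith
end

section
/- Let p be a probability distribution on a finite set X, r ∈ ℝ, and for each n let T_n^X be the set of types. Define for each type t, Π_t-restricted quantities P(t) = p^n(T_n^t). Then for every α ∈ (1/2,1), lim_{n→∞} inf_{t ∈ T_n^X} (1/n)[ (α/(α−1)) log₂ P(t) + log₂|T_n^t| ] = H_β(p), where 1/α + 1/β = 2 and H_β(p) = (1/(1−β)) log₂ ∑_x p(x)^β. -/
/-- The empirical distribution (type) of a sequence `xs : Fin n → X`. -/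
noncomputable def typeOf {X : Type*} [Fintype X] [DecidableEq X] (n : ℕ) (xs : Fin n → X) :
    X → ℝ :=
  fun a => ((Finset.univ.filter fun i => xs i = a).card : ℝ) / n

open Finset Real

section Aux
variable {X : Type*} [Fintype X] [DecidableEq X]

lemma count_eq_of_typeOf_eq {n : ℕ} {xs xs' : Fin n → X}
    (h : typeOf n xs = typeOf n xs') (a : X) :
    (univ.filter fun i => xs i = a).card = (univ.filter fun i => xs' i = a).card := by
  rcases Nat.eq_zero_or_pos n with hn | hn
  · subst hn
    simp [Finset.filter_eq_empty_iff, Fin.elim0]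
  · have h' := congrFun h a
    unfold typeOf at h'
    have hn' : (n : ℝ) ≠ 0 := Nat.cast_ne_zero.mpr hn.ne'
    field_simp at h'
    exact_mod_cast h'

lemma prod_comp_eq {n : ℕ} (f : X → ℝ) (xs : Fin n → X) :
    ∏ i, f (xs i) = ∏ a, f a ^ (univ.filter fun i => xs i = a).card := by
  rw [← Finset.prod_fiberwise_of_maps_to (fun i (_ : i ∈ univ) => mem_univ (xs i))
      (fun i => f (xs i))]
  refine Finset.prod_congr rfl fun a _ => ?_
  rw [Finset.prod_congr rfl (fun i hi => ?_), Finset.prod_const]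
  · simp only [Finset.mem_filter] at hi
    rw [hi.2]

lemma prod_eq_of_typeOf_eq {n : ℕ} (f : X → ℝ) {xs xs' : Fin n → X}
    (h : typeOf n xs = typeOf n xs') :
    ∏ i, f (xs i) = ∏ i, f (xs' i) := by
  rw [prod_comp_eq f xs, prod_comp_eq f xs']
  exact Finset.prod_congr rfl fun a _ => by rw [count_eq_of_typeOf_eq h a]

lemma supp_of_typeOf_eq {p : X → ℝ} {n : ℕ} {xs xs' : Fin n → X}
    (h : typeOf n xs = typeOf n xs') (hs : ∀ i, p (xs i) ≠ 0) :
    ∀ i, p (xs' i) ≠ 0 := by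
  intro i
  have hpos : 0 < (univ.filter fun j => xs' j = xs' i).card :=
    Finset.card_pos.mpr ⟨i, by simp⟩
  rw [← count_eq_of_typeOf_eq h (xs' i)] at hpos
  obtain ⟨j, hj⟩ := Finset.card_pos.mp hpos
  simp only [Finset.mem_filter] at hj
  rw [← hj.2]
  exact hs j

end Aux

section Aux2
variable {X : Type*} [Fintype X] [DecidableEq X]

lemma sum_subtype_eq_filter {n : ℕ} (t : X → ℝ) (f : (Fin n → X) → ℝ) :
    (∑ xs : {xs : Fin n → X // typeOf n xs = t}, f xs.1) =
      ∑ xs ∈ univ.filter (fun xs => typeOf n xs = t), f xs := by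
  rw [Finset.sum_subtype (p := fun xs => typeOf n xs = t)
    (univ.filter (fun xs => typeOf n xs = t)) (fun x => by simp) f]

end Aux2

section Aux3
variable {X : Type*} [Fintype X] [DecidableEq X]

lemma ncard_type_eq {n : ℕ} (t : X → ℝ) :
    ({xs : Fin n → X | typeOf n xs = t}).ncard =
      (univ.filter (fun xs : Fin n → X => typeOf n xs = t)).card := by
  rw [← Set.ncard_coe_finset]
  congr 1
  ext xs
  simp

lemma fiber_sum_eq {n : ℕ} (f : X → ℝ) {t : X → ℝ} {xs₀ : Fin n → X}
    (h : typeOf n xs₀ = t) :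
    ∑ xs ∈ univ.filter (fun xs : Fin n → X => typeOf n xs = t), ∏ i, f (xs i) =
      ((univ.filter (fun xs : Fin n → X => typeOf n xs = t)).card : ℝ) * ∏ i, f (xs₀ i) := by
  rw [Finset.sum_congr rfl (fun xs hxs => ?_), Finset.sum_const, nsmul_eq_mul]
  simp only [Finset.mem_filter] at hxs
  exact prod_eq_of_typeOf_eq f (by rw [hxs.2, h])

end Aux3

section Aux4
variable {X : Type*} [Fintype X] [DecidableEq X]

lemma card_types_le {n : ℕ} (G : Finset (Fin n → X)) :
    (G.image (typeOf n)).card ≤ (n + 1) ^ Fintype.card X := by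
  have hsub : G.image (typeOf n) ⊆
      (univ : Finset (X → Fin (n + 1))).image (fun c => fun a => ((c a : ℕ) : ℝ) / n) := by
    intro t ht
    simp only [Finset.mem_image] at ht ⊢
    obtain ⟨xs, _, rfl⟩ := ht
    refine ⟨fun a => ⟨(univ.filter fun i => xs i = a).card,
      Nat.lt_succ_of_le ((Finset.card_filter_le _ _).trans_eq (by simp))⟩, mem_univ _, ?_⟩
    rfl
  calc (G.image (typeOf n)).card ≤ _ := Finset.card_le_card hsub
    _ ≤ (univ : Finset (X → Fin (n + 1))).card := Finset.card_image_le
    _ = (n + 1) ^ Fintype.card X := by simp [Finset.card_univ]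

lemma filter_type_eq_of_mem {p : X → ℝ} {n : ℕ} {t : X → ℝ}
    (ht : t ∈ (univ.filter (fun xs : Fin n → X => ∀ i, p (xs i) ≠ 0)).image (typeOf n)) :
    (univ.filter (fun xs : Fin n → X => ∀ i, p (xs i) ≠ 0)).filter
        (fun xs => typeOf n xs = t) =
      univ.filter (fun xs : Fin n → X => typeOf n xs = t) := by
  simp only [Finset.mem_image, Finset.mem_filter, Finset.mem_univ, true_and] at ht
  obtain ⟨xs₀, hxs₀, rfl⟩ := ht
  ext xs
  simp only [Finset.mem_filter, Finset.mem_univ, true_and, and_iff_right_iff_imp]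
  intro hxs
  exact supp_of_typeOf_eq hxs.symm hxs₀

lemma sigma_decomp (p : X → ℝ) {β : ℝ} (hβ0 : β ≠ 0) (n : ℕ) :
    ∑ xs : Fin n → X, ∏ i, (p (xs i)) ^ β =
    ∑ t ∈ (univ.filter (fun xs : Fin n → X => ∀ i, p (xs i) ≠ 0)).image (typeOf n),
      ∑ xs ∈ univ.filter (fun xs : Fin n → X => typeOf n xs = t),
        ∏ i, (p (xs i)) ^ β := by
  set G := univ.filter (fun xs : Fin n → X => ∀ i, p (xs i) ≠ 0) with hG
  have h1 : ∑ xs ∈ G, ∏ i, (p (xs i)) ^ β = ∑ xs : Fin n → X, ∏ i, (p (xs i)) ^ β := by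
    refine Finset.sum_subset (Finset.subset_univ G) fun xs _ hxs => ?_
    simp only [hG, Finset.mem_filter, Finset.mem_univ, true_and, not_forall, not_not] at hxs
    obtain ⟨i, hi⟩ := hxs
    exact Finset.prod_eq_zero (mem_univ i) (by rw [hi, Real.zero_rpow hβ0])
  rw [← h1, ← Finset.sum_fiberwise_of_maps_to (g := typeOf n)
      (fun xs hxs => Finset.mem_image_of_mem _ hxs)]
  exact Finset.sum_congr rfl fun t ht => by rw [filter_type_eq_of_mem ht]

end Aux4

lemma value_identity {C β N q : ℝ} (hCβ : C * β + 1 = C) (hN : 0 < N) (hq : 0 < q) :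
    (C * β) * Real.logb 2 (N * q) + Real.logb 2 N = C * Real.logb 2 (N * q ^ β) := by
  simp only [Real.logb]
  rw [Real.log_mul hN.ne' hq.ne', Real.log_mul hN.ne' (Real.rpow_pos_of_pos hq β).ne',
    Real.log_rpow hq]
  have h2 : Real.log 2 ≠ 0 := by
    simpa using Real.log_ne_zero_of_pos_of_ne_one two_pos (by norm_num)
  field_simp
  linear_combination Real.log N * hCβ

lemma beta_facts {α β : ℝ} (hα : α ∈ Set.Ioo (1/2 : ℝ) 1) (hβ : 1/α + 1/β = 2) :
    β = α / (2 * α - 1) ∧ 0 < β ∧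
    ((2 * α - 1) / (α - 1)) * β + 1 = (2 * α - 1) / (α - 1) ∧
    α / (α - 1) = ((2 * α - 1) / (α - 1)) * β ∧
    1 / (1 - β) = (2 * α - 1) / (α - 1) ∧
    (2 * α - 1) / (α - 1) < 0 := by
  obtain ⟨h1, h2⟩ := hα
  have hα0 : α ≠ 0 := by linarith
  have h2α : 0 < 2 * α - 1 := by linarith
  have hα1 : α - 1 < 0 := by linarith
  have hβ0 : β ≠ 0 := by
    rintro rfl
    rw [div_zero, add_zero, div_eq_iff hα0] at hβ
    linarith
  have hβval : β = α / (2 * α - 1) := by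
    field_simp at hβ ⊢
    rw [eq_div_iff (by linarith)]; linarith [hβ]
  have h1β : 1 - β = (α - 1) / (2 * α - 1) := by
    rw [hβval, eq_div_iff h2α.ne', sub_mul, div_mul_cancel₀ _ h2α.ne']; ring
  refine ⟨hβval, by rw [hβval]; positivity, ?_, ?_, ?_, ?_⟩
  · rw [hβval]; field_simp [h2α.ne', hα1.ne]; ring
  · rw [hβval, div_mul_div_comm, mul_comm (2*α-1) α, mul_div_mul_right _ _ h2α.ne']
  · rw [h1β, one_div_div]
  · exact div_neg_of_pos_of_neg h2α hα1

open Filter in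
lemma logb_succ_div_tendsto :
    Tendsto (fun n : ℕ => Real.logb 2 ((n : ℝ) + 1) / n) atTop (nhds 0) := by
  have A : Tendsto (fun x : ℝ => Real.log x / x) atTop (nhds 0) :=
    Real.isLittleO_log_id_atTop.tendsto_div_nhds_zero
  have B : Tendsto (fun n : ℕ => ((n : ℝ) + 1)) atTop atTop :=
    tendsto_atTop_add_const_right _ 1 tendsto_natCast_atTop_atTop
  have AB := A.comp B
  have C : Tendsto (fun n : ℕ => ((n : ℝ) + 1) / n) atTop (nhds 1) := by
    have : Tendsto (fun n : ℕ => 1 + 1 / (n : ℝ)) atTop (nhds (1 + 0)) :=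
      tendsto_const_nhds.add tendsto_one_div_atTop_nhds_zero_nat
    rw [add_zero] at this
    refine this.congr' ?_
    filter_upwards [eventually_ge_atTop 1] with n hn
    have : (n : ℝ) ≠ 0 := Nat.cast_ne_zero.mpr (by omega)
    field_simp
  have D : Tendsto (fun n : ℕ => Real.log ((n : ℝ) + 1) / n) atTop (nhds 0) := by
    have := AB.mul C
    rw [zero_mul] at this
    refine this.congr' ?_
    filter_upwards [eventually_ge_atTop 1] with n hn
    have hn' : (n : ℝ) ≠ 0 := Nat.cast_ne_zero.mpr (by omega)
    have hn1 : ((n : ℝ) + 1) ≠ 0 := by positivity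
    simp only [Function.comp_apply]; field_simp
  have := D.div_const (Real.log 2)
  rw [zero_div] at this
  refine this.congr fun n => ?_
  rw [Real.logb, div_div, div_div, mul_comm]

section Aux5
variable {X : Type*} [Fintype X] [DecidableEq X]

lemma type_data {p : X → ℝ} (hp0 : ∀ x, 0 ≤ p x) {n : ℕ} {β C : ℝ}
    (hCβ : C * β + 1 = C) {t : X → ℝ} {xs₀ : Fin n → X}
    (ht : typeOf n xs₀ = t) (hsupp : ∀ i, p (xs₀ i) ≠ 0) :
    ((C * β) * Real.logb 2 (∑ xs : {xs : Fin n → X // typeOf n xs = t}, ∏ i, p (xs.1 i)) +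
      Real.logb 2 (({xs : Fin n → X | typeOf n xs = t}).ncard) =
    C * Real.logb 2 (∑ xs ∈ univ.filter (fun xs : Fin n → X => typeOf n xs = t),
        ∏ i, (p (xs i)) ^ β)) ∧
    0 < ∑ xs ∈ univ.filter (fun xs : Fin n → X => typeOf n xs = t), ∏ i, (p (xs i)) ^ β := by
  set F := univ.filter (fun xs : Fin n → X => typeOf n xs = t) with hF
  set N := F.card with hN
  set q := ∏ i, p (xs₀ i) with hq
  have hqpos : 0 < q :=
    Finset.prod_pos fun i _ => (hp0 (xs₀ i)).lt_of_ne (Ne.symm (hsupp i))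
  have hNpos : 0 < N := Finset.card_pos.mpr ⟨xs₀, by simp [hF, ht]⟩
  have hNpos' : (0 : ℝ) < N := Nat.cast_pos.mpr hNpos
  have hsum1 : (∑ xs : {xs : Fin n → X // typeOf n xs = t}, ∏ i, p (xs.1 i)) = N * q := by
    rw [sum_subtype_eq_filter t (fun xs => ∏ i, p (xs i)), fiber_sum_eq p ht]
  have hsum2 : (∑ xs ∈ F, ∏ i, (p (xs i)) ^ β) = N * q ^ β := by
    rw [fiber_sum_eq (fun x => p x ^ β) ht,
      Real.finset_prod_rpow univ (fun i => p (xs₀ i)) (fun i _ => hp0 (xs₀ i)) β]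
  have hncard : (({xs : Fin n → X | typeOf n xs = t}).ncard : ℝ) = N := by
    rw [ncard_type_eq]
  constructor
  · rw [hsum1, hncard, hsum2]
    exact value_identity hCβ hNpos' hqpos
  · rw [hsum2]
    exact mul_pos hNpos' (Real.rpow_pos_of_pos hqpos β)

end Aux5

/-- For `α ∈ (1/2,1)` and `1/α + 1/β = 2`:
`lim_n inf_t (1/n)[ (α/(α-1)) log₂ P(t) + log₂ |T_n^t| ] = H_β(p)`,
the infimum running over types `t` of sequences supported in `supp p`
(equivalently those with `P(t) > 0`). -/
theorem types_renyi_limit {X : Type*} [Fintype X] [DecidableEq X] (p : X → ℝ)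
    (hp : IsProb p) (α : ℝ) (hα : α ∈ Set.Ioo (1/2 : ℝ) 1) (β : ℝ)
    (hβ : 1/α + 1/β = 2) :
    Filter.Tendsto (fun n : ℕ =>
        sInf {v | ∃ t : X → ℝ,
          (∃ xs : Fin n → X, typeOf n xs = t ∧ ∀ i, p (xs i) ≠ 0) ∧
          v = (1 / (n : ℝ)) *
            ((α / (α - 1)) *
                Real.logb 2 (∑ xs : {xs : Fin n → X // typeOf n xs = t}, ∏ i, p (xs.1 i)) +
              Real.logb 2 ({xs : Fin n → X | typeOf n xs = t}.ncard))})
      Filter.atTop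
      (nhds ((1 / (1 - β)) * Real.logb 2 (∑ x, p x ^ β))) := by
  obtain ⟨hp0, hp1⟩ := hp
  obtain ⟨hβval, hβpos, hCβ, hcC, h1β, hCneg⟩ := beta_facts hα hβ
  set C : ℝ := (2 * α - 1) / (α - 1) with hCdef
  set H : ℝ := ∑ x, p x ^ β with hHdef
  obtain ⟨x₀, hx₀⟩ : ∃ x, p x ≠ 0 := by
    by_contra h
    push_neg at h
    rw [Finset.sum_eq_zero (fun x _ => h x)] at hp1
    norm_num at hp1
  have hx₀pos : 0 < p x₀ := (hp0 x₀).lt_of_ne (Ne.symm hx₀)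
  have hHpos : 0 < H :=
    Finset.sum_pos' (fun x _ => Real.rpow_nonneg (hp0 x) β)
      ⟨x₀, Finset.mem_univ x₀, Real.rpow_pos_of_pos hx₀pos β⟩
  rw [h1β]
  set K : ℝ := (Fintype.card X : ℝ) with hKdef
  have key : ∀ n : ℕ, 1 ≤ n →
      C * Real.logb 2 H ≤ sInf {v | ∃ t : X → ℝ,
          (∃ xs : Fin n → X, typeOf n xs = t ∧ ∀ i, p (xs i) ≠ 0) ∧
          v = (1 / (n : ℝ)) *
            ((α / (α - 1)) *
                Real.logb 2 (∑ xs : {xs : Fin n → X // typeOf n xs = t}, ∏ i, p (xs.1 i)) +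
              Real.logb 2 ({xs : Fin n → X | typeOf n xs = t}.ncard))} ∧
      sInf {v | ∃ t : X → ℝ,
          (∃ xs : Fin n → X, typeOf n xs = t ∧ ∀ i, p (xs i) ≠ 0) ∧
          v = (1 / (n : ℝ)) *
            ((α / (α - 1)) *
                Real.logb 2 (∑ xs : {xs : Fin n → X // typeOf n xs = t}, ∏ i, p (xs.1 i)) +
              Real.logb 2 ({xs : Fin n → X | typeOf n xs = t}.ncard))} ≤
        C * Real.logb 2 H + (-C) * K * (Real.logb 2 ((n : ℝ) + 1) / n) := by
    intro n hn
    have hn0 : (0 : ℝ) < n := by exact_mod_cast hn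
    set S := {v | ∃ t : X → ℝ,
          (∃ xs : Fin n → X, typeOf n xs = t ∧ ∀ i, p (xs i) ≠ 0) ∧
          v = (1 / (n : ℝ)) *
            ((α / (α - 1)) *
                Real.logb 2 (∑ xs : {xs : Fin n → X // typeOf n xs = t}, ∏ i, p (xs.1 i)) +
              Real.logb 2 ({xs : Fin n → X | typeOf n xs = t}.ncard))} with hSdef
    have hmem' : ∀ (xs₀ : Fin n → X), (∀ i, p (xs₀ i) ≠ 0) →
        (1 / (n : ℝ)) * (C * Real.logb 2 (∑ xs ∈ Finset.univ.filter
            (fun xs : Fin n → X => typeOf n xs = typeOf n xs₀),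
          ∏ i, (p (xs i)) ^ β)) ∈ S := by
      intro xs₀ hsupp
      refine ⟨typeOf n xs₀, ⟨xs₀, rfl, hsupp⟩, ?_⟩
      rw [hcC, (type_data hp0 hCβ rfl hsupp).1]
    have hSig : ∑ xs : Fin n → X, ∏ i, (p (xs i)) ^ β = H ^ n := by
      rw [← Fintype.prod_sum (fun (_ : Fin n) (x : X) => p x ^ β), ← hHdef,
        Finset.prod_const, Finset.card_univ, Fintype.card_fin]
    have hterm_nonneg : ∀ xs : Fin n → X, 0 ≤ ∏ i, (p (xs i)) ^ β := fun xs =>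
      Finset.prod_nonneg fun i _ => Real.rpow_nonneg (hp0 (xs i)) β
    have hble : ∀ t : X → ℝ,
        (∑ xs ∈ Finset.univ.filter (fun xs : Fin n → X => typeOf n xs = t),
          ∏ i, (p (xs i)) ^ β) ≤ H ^ n := by
      intro t
      rw [← hSig]
      exact Finset.sum_le_sum_of_subset_of_nonneg (Finset.subset_univ _)
        (fun xs _ _ => hterm_nonneg xs)
    have hlogH : Real.logb 2 (H ^ n) = (n : ℝ) * Real.logb 2 H := Real.logb_pow 2 H n
    have hlow : ∀ v ∈ S, C * Real.logb 2 H ≤ v := by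
      rintro v ⟨t, ⟨xs₀, ht, hsupp⟩, rfl⟩
      rw [hcC, (type_data hp0 hCβ ht hsupp).1]
      set s := ∑ xs ∈ Finset.univ.filter (fun xs : Fin n → X => typeOf n xs = t),
        ∏ i, (p (xs i)) ^ β with hsdef
      have hspos : 0 < s := (type_data hp0 hCβ ht hsupp).2
      have h1 : Real.logb 2 s ≤ (n : ℝ) * Real.logb 2 H := by
        rw [← hlogH]
        exact ((Real.logb_le_logb one_lt_two hspos (pow_pos hHpos n)).mpr (hble t))
      calc C * Real.logb 2 H = (1 / (n : ℝ)) * (C * ((n : ℝ) * Real.logb 2 H)) := by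
            field_simp
        _ ≤ (1 / (n : ℝ)) * (C * Real.logb 2 s) := by
            refine mul_le_mul_of_nonneg_left ?_ (by positivity)
            exact mul_le_mul_of_nonpos_left h1 hCneg.le
    have hSne : S.Nonempty := ⟨_, hmem' (fun _ => x₀) (fun _ => hx₀)⟩
    have hbdd : BddBelow S := ⟨C * Real.logb 2 H, hlow⟩
    refine ⟨le_csInf hSne hlow, ?_⟩
    set G := Finset.univ.filter (fun xs : Fin n → X => ∀ i, p (xs i) ≠ 0) with hGdef
    set TS := G.image (typeOf n) with hTSdef
    have hTSne : TS.Nonempty :=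
      ⟨typeOf n (fun _ => x₀), Finset.mem_image_of_mem _ (by simp [hGdef, hx₀])⟩
    obtain ⟨tm, htmTS, hmax⟩ := Finset.exists_max_image TS
      (fun t => ∑ xs ∈ Finset.univ.filter (fun xs : Fin n → X => typeOf n xs = t),
        ∏ i, (p (xs i)) ^ β) hTSne
    obtain ⟨xsm, hxsmG, htm⟩ := Finset.mem_image.mp htmTS
    have hsuppm : ∀ i, p (xsm i) ≠ 0 := by
      have := Finset.mem_filter.mp hxsmG
      exact this.2
    set sm := ∑ xs ∈ Finset.univ.filter (fun xs : Fin n → X => typeOf n xs = tm),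
      ∏ i, (p (xs i)) ^ β with hsmdef
    have hsmpos : 0 < sm := (type_data hp0 hCβ htm hsuppm).2
    have hcard : (TS.card : ℝ) ≤ ((n : ℝ) + 1) ^ Fintype.card X := by
      calc (TS.card : ℝ) ≤ (((n + 1) ^ Fintype.card X : ℕ) : ℝ) :=
            Nat.cast_le.mpr (card_types_le G)
        _ = ((n : ℝ) + 1) ^ Fintype.card X := by push_cast; ring
    have hHle : H ^ n ≤ (((n : ℝ) + 1) ^ Fintype.card X) * sm := by
      rw [← hSig, sigma_decomp p hβpos.ne' n]
      calc (∑ t ∈ TS, ∑ xs ∈ Finset.univ.filter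
              (fun xs : Fin n → X => typeOf n xs = t), ∏ i, (p (xs i)) ^ β)
          ≤ TS.card • sm := Finset.sum_le_card_nsmul TS _ sm (fun t ht => hmax t ht)
        _ = (TS.card : ℝ) * sm := nsmul_eq_mul _ _
        _ ≤ (((n : ℝ) + 1) ^ Fintype.card X) * sm :=
            mul_le_mul_of_nonneg_right hcard hsmpos.le
    have hlog1 : (n : ℝ) * Real.logb 2 H - K * Real.logb 2 ((n : ℝ) + 1) ≤
        Real.logb 2 sm := by
      have h1 : Real.logb 2 (H ^ n) ≤
          Real.logb 2 ((((n : ℝ) + 1) ^ Fintype.card X) * sm) :=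
        (Real.logb_le_logb one_lt_two (pow_pos hHpos n) (by positivity)).mpr hHle
      rw [hlogH, Real.logb_mul (by positivity) hsmpos.ne', Real.logb_pow] at h1
      rw [hKdef]
      linarith
    have hfin : (1 / (n : ℝ)) * (C * Real.logb 2 sm) ≤
        C * Real.logb 2 H + (-C) * K * (Real.logb 2 ((n : ℝ) + 1) / n) := by
      have h2 : C * Real.logb 2 sm ≤
          C * ((n : ℝ) * Real.logb 2 H - K * Real.logb 2 ((n : ℝ) + 1)) :=
        mul_le_mul_of_nonpos_left hlog1 hCneg.le
      calc (1 / (n : ℝ)) * (C * Real.logb 2 sm)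
          ≤ (1 / (n : ℝ)) * (C * ((n : ℝ) * Real.logb 2 H - K * Real.logb 2 ((n : ℝ) + 1))) :=
            mul_le_mul_of_nonneg_left h2 (by positivity)
        _ = C * Real.logb 2 H + (-C) * K * (Real.logb 2 ((n : ℝ) + 1) / n) := by
            field_simp
            ring
    refine (csInf_le hbdd ?_).trans hfin
    have := hmem' xsm hsuppm
    rw [htm] at this
    exact this
  have hup : Filter.Tendsto (fun n : ℕ =>
      C * Real.logb 2 H + (-C) * K * (Real.logb 2 ((n : ℝ) + 1) / n)) Filter.atTop
      (nhds (C * Real.logb 2 H)) := by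
    have := (tendsto_const_nhds (x := C * Real.logb 2 H)).add
      ((tendsto_const_nhds (x := (-C) * K)).mul logb_succ_div_tendsto)
    simpa using this
  refine tendsto_of_tendsto_of_tendsto_of_le_of_le' tendsto_const_nhds hup ?_ ?_
  · filter_upwards [Filter.eventually_ge_atTop 1] with n hn
    exact (key n hn).1
  · filter_upwards [Filter.eventually_ge_atTop 1] with n hn
    exact (key n hn).2
end
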